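/- Let a be a set of infinite regular cardinals with μ = sup(a) ∉ a, J an ideal on a containing all bounded subsets of a, λ > μ a regular cardinal, and ⟨g_α : α < λ⟩ a sequence of partial functions on a satisfying: (a) each dom(g_α) is cobounded in a with g_α(κ) ∈ κ; (b) if α < β < λ then ∀^J κ ∈ a, g_α(κ) < g_β(κ); (c) for every f ∈ ∏a there is ζ < λ with ∀^J κ ∈ a, f(κ) < g_{μ·ζ}(κ); (d) if α < β < α + μ then g_α(κ) < g_β(κ) for all κ ∈ dom(g_α) ∩ dom(g_β). Let H : (μ → 2) → ({<λ}2) be a surjection. For a family η = (η_κ)_{κ∈a} of total functions η_κ : κ → 2, define h_η : λ → 2 by h_η(α) = 0 iff (∀^J κ ∈ a, κ ∈ dom(g_α) and η_κ(g_α(κ)) = 0), and h_η(α) = 1 otherwise; for ξ < λ let ρ_η^ξ : μ → 2 be given by ρ_η^ξ(i) = h_η(μ·ξ + i), and let ρ_η be the transfinite concatenation of the sequence ⟨H(ρ_η^ξ) : ξ < λ⟩ of binary sequences. Then for every p ∈ P and every dense subset D of ({<λ}2) (dense: every element of ({<λ}2) has an extension in D), there exist q ∈ P with q_κ extending p_κ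 for all κ ∈ a and s ∈ D such that for every family η = (η_κ)_{κ∈a} of total functions η_κ : κ → 2 with η_κ extending q_κ for all κ, s is an initial segment of ρ_η. -/

import Mathlib

open Cardinal Set

/-- `f` is a member of `∏ a`: for every `κ ∈ a`, `f κ` is an ordinal less than `κ`. -/
def InProd (a : Set Cardinal) (f : Cardinal → Ordinal) : Prop :=
  ∀ κ ∈ a, f κ < κ.ord

/-- `J` is an ideal on the set `a`: a collection of subsets of `a` containing `∅`,
closed under subsets and finite unions, with `a ∉ J`. -/
def IsIdealOn (a : Set Cardinal) (J : Set (Set Cardinal)) : Prop :=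
  (∀ b ∈ J, b ⊆ a) ∧ (∅ : Set Cardinal) ∈ J ∧
  (∀ b ∈ J, ∀ c ⊆ b, c ∈ J) ∧
  (∀ b ∈ J, ∀ c ∈ J, b ∪ c ∈ J) ∧ a ∉ J

/-- `f <_J g` : the set of `κ ∈ a` where `f κ < g κ` fails belongs to `J`. -/
def ltJ (a : Set Cardinal) (J : Set (Set Cardinal)) (f g : Cardinal → Ordinal) : Prop :=
  {κ ∈ a | ¬ (f κ < g κ)} ∈ J

/-- `tcf (∏ a / J) = lam` : there is a `<_J`-increasing sequence of length `lam`
in `∏ a` which is cofinal in `(∏ a, <_J)`. -/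
def IsTcf (a : Set Cardinal) (J : Set (Set Cardinal)) (lam : Cardinal) : Prop :=
  ∃ F : Ordinal → Cardinal → Ordinal,
    (∀ α < lam.ord, InProd a (F α)) ∧
    (∀ α β, α < β → β < lam.ord → ltJ a J (F α) (F β)) ∧
    (∀ f, InProd a f → ∃ α < lam.ord, ltJ a J f (F α))

/-- A condition of `P = ∏_{κ ∈ a} ({<κ} 2)`: a family of binary sequences, where the
sequence at coordinate `κ` has length `ℓ κ < κ` (its values are given by a total
function `Ordinal → Fin 2`, only the values below `ℓ κ` being relevant). -/
def InP (a : Set Cardinal) (ℓ : Cardinal → Ordinal) : Prop :=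
  ∀ κ ∈ a, ℓ κ < κ.ord

/-- The condition `(ℓq, q)` extends `(ℓp, p)` coordinatewise (sequence extension). -/
def ExtendsP (a : Set Cardinal) (ℓp : Cardinal → Ordinal) (p : Cardinal → Ordinal → Fin 2)
    (ℓq : Cardinal → Ordinal) (q : Cardinal → Ordinal → Fin 2) : Prop :=
  ∀ κ ∈ a, ℓp κ ≤ ℓq κ ∧ ∀ i < ℓp κ, q κ i = p κ i

/-- Main claim of the paper (density form): for every condition `p ∈ P` and every dense
subset `Dset` of `({<lam} 2)` there are an extension `q` of `p` and an `s ∈ Dset` such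
that for every family `η` of total functions extending `q`, the sequence `s` is an
initial segment of `ρ_η`, the transfinite concatenation of `⟨H (ρ_η^ξ) : ξ < lam⟩`,
where `ρ_η^ξ (i) = h_η (μ·ξ + i)` and `h_η α = 0` iff almost all `κ` satisfy
`κ ∈ dom g_α ∧ η_κ (g_α κ) = 0`.  (Binary sequences of length `< lam` are represented
as pairs `(len, values)`; `H` is represented by its length and value components
`Hlen`, `Hfn`; the concatenation is represented via its offset function `off`.) -/
theorem stmt_7 (a : Set Cardinal) (μ lam : Cardinal) (J : Set (Set Cardinal))
    (ha : ∀ κ ∈ a, κ.IsRegular) (hsup : sSup a = μ) (hμa : μ ∉ a)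
    (hJ : IsIdealOn a J) (hJbd : ∀ b ⊆ a, sSup b < μ → b ∈ J)
    (hlam : lam.IsRegular) (hμlam : μ < lam)
    (D : Ordinal → Set Cardinal) (g : Ordinal → Cardinal → Ordinal)
    -- (a) each domain is a cobounded subset of `a`, and `g α κ ∈ κ` on the domain
    (hga : ∀ α < lam.ord, D α ⊆ a ∧ sSup (a \ D α) < μ ∧ ∀ κ ∈ D α, g α κ < κ.ord)
    -- (b) increasing mod `J`
    (hgb : ∀ α β, α < β → β < lam.ord →
      {κ ∈ a | ¬ (κ ∈ D α ∧ κ ∈ D β ∧ g α κ < g β κ)} ∈ J)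
    -- (c) cofinal, with witnesses divisible by `μ`
    (hgc : ∀ f, InProd a f → ∃ ζ : Ordinal, μ.ord * ζ < lam.ord ∧
      {κ ∈ a | ¬ (κ ∈ D (μ.ord * ζ) ∧ f κ < g (μ.ord * ζ) κ)} ∈ J)
    -- (d) pointwise increasing within blocks of length `μ`
    (hgd : ∀ α β, α < β → β < α + μ.ord → β < lam.ord →
      ∀ κ ∈ D α ∩ D β, g α κ < g β κ)
    -- `H : (μ → 2) → ({<lam} 2)`, given by its length and value components
    (Hlen : ({i : Ordinal // i < μ.ord} → Fin 2) → Ordinal)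
    (Hfn : ({i : Ordinal // i < μ.ord} → Fin 2) → Ordinal → Fin 2)
    (hHlt : ∀ σ, Hlen σ < lam.ord)
    -- `H` is onto `({<lam} 2)`
    (hHsurj : ∀ l < lam.ord, ∀ t : Ordinal → Fin 2,
      ∃ σ, Hlen σ = l ∧ ∀ i < l, Hfn σ i = t i)
    -- `Dset` is a dense subset of `({<lam} 2)`
    (Dset : Set (Ordinal × (Ordinal → Fin 2)))
    (hDsub : ∀ s ∈ Dset, s.1 < lam.ord)
    (hDdense : ∀ l < lam.ord, ∀ t : Ordinal → Fin 2,
      ∃ s ∈ Dset, l ≤ s.1 ∧ ∀ i < l, s.2 i = t i)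
    -- `p` is a condition in `P`
    (ℓp : Cardinal → Ordinal) (p : Cardinal → Ordinal → Fin 2) (hp : InP a ℓp) :
    ∃ (ℓq : Cardinal → Ordinal) (q : Cardinal → Ordinal → Fin 2),
      InP a ℓq ∧ ExtendsP a ℓp p ℓq q ∧
      ∃ s ∈ Dset,
        -- for every family `η` of total functions extending `q` ...
        ∀ η : Cardinal → Ordinal → Fin 2, (∀ κ ∈ a, ∀ i < ℓq κ, η κ i = q κ i) →
        -- ... and `hEta` the function `h_η : lam → 2` determined by `η` ...
        ∀ hEta : Ordinal → Fin 2,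
          (∀ α : Ordinal,
            (hEta α = 0 ↔ {κ ∈ a | ¬ (κ ∈ D α ∧ η κ (g α κ) = 0)} ∈ J)) →
        -- ... and `off` the offset function of the concatenation of the blocks
        -- `H (ρ_η^ξ)`, `ξ < lam`, where `ρ_η^ξ (i) = h_η (μ·ξ + i)` ...
        ∀ off : Ordinal → Ordinal,
          off 0 = 0 →
          (∀ ξ : Ordinal,
            off (ξ + 1) = off ξ + Hlen (fun i => hEta (μ.ord * ξ + i.1))) →
          (∀ ξ : Ordinal, Order.IsSuccLimit ξ → off ξ = sSup (off '' Set.Iio ξ)) →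
        -- ... `s` is an initial segment of the concatenation `ρ_η`.
        ∀ i < s.1, ∃ ξ < lam.ord,
          ∃ d < Hlen (fun j => hEta (μ.ord * ξ + j.1)),
            i = off ξ + d ∧ s.2 i = Hfn (fun j => hEta (μ.ord * ξ + j.1)) d := by
  classical
  obtain ⟨hJa, hJ0, hJdown, hJun, hJtop⟩ := hJ
  have hJsub : ∀ B C : Set Cardinal, C ∈ J → B ⊆ C → B ∈ J := fun B C hC hBC => hJdown C hC B hBC
  have fin2_eq : ∀ x y : Fin 2, (x = 0 ↔ y = 0) → x = y := by decide
  have fin2_one : ∀ x : Fin 2, x ≠ 0 → x = 1 := by decide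
  -- `a` is nonempty and `μ` is infinite
  have hane : a.Nonempty := by
    rcases Set.eq_empty_or_nonempty a with h | h
    · exact absurd (h ▸ hJ0) (h ▸ hJtop)
    · exact h
  have hlaminf : ℵ₀ ≤ lam := hlam.aleph0_le
  by_cases hbdd : BddAbove a
  case neg =>
    exfalso
    obtain ⟨_, h2, _⟩ := hga 0 (Cardinal.isSuccLimit_ord hlaminf).pos
    rw [← hsup, csSup_of_not_bddAbove hbdd, csSup_empty] at h2
    exact not_lt_bot h2
  have hμinf : ℵ₀ ≤ μ := by
    obtain ⟨κ0, hκ0⟩ := hane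
    calc ℵ₀ ≤ κ0 := (ha κ0 hκ0).aleph0_le
    _ ≤ sSup a := le_csSup hbdd hκ0
    _ = μ := hsup
  have hμlim : Order.IsSuccLimit μ.ord := Cardinal.isSuccLimit_ord hμinf
  have hlamind : ∀ x y : Ordinal, x < lam.ord → y < lam.ord → x + y < lam.ord := by
    intro x y hx hy
    rw [Cardinal.lt_ord, Ordinal.card_add]
    exact Cardinal.add_lt_of_lt hlaminf (Cardinal.lt_ord.1 hx) (Cardinal.lt_ord.1 hy)
  have habs : ∀ i : Ordinal, i < μ.ord → i + μ.ord = μ.ord := by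
    intro i hi
    apply le_antisymm
    · rw [Ordinal.add_le_iff_of_isSuccLimit hμlim]
      intro b' hb'
      have : i + b' < μ.ord := by
        rw [Cardinal.lt_ord, Ordinal.card_add]
        exact Cardinal.add_lt_of_lt hμinf (Cardinal.lt_ord.1 hi) (Cardinal.lt_ord.1 hb')
      exact this.le
    · exact le_add_self
  -- the coding block start `μ·ζ` given by (c)
  obtain ⟨ζ, hζ, hζJ⟩ := hgc ℓp hp
  have hMlam : μ.ord * ζ < lam.ord := hζ
  have hμordlt : μ.ord < lam.ord := Cardinal.ord_lt_ord.2 hμlam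
  have hM1lam : μ.ord * ζ + μ.ord < lam.ord := hlamind _ _ hMlam hμordlt
  have hMM1 : μ.ord * ζ < μ.ord * ζ + μ.ord := by
    have h := add_lt_add_right hμlim.pos (μ.ord * ζ)
    rwa [add_zero] at h
  have hζlam : ζ < lam.ord := lt_of_le_of_lt (Ordinal.le_mul_right ζ hμlim.pos) hζ
  -- the values decided "for free" below the coding block, and the offsets `O`
  set val : Ordinal → Cardinal → Fin 2 :=
    fun α κ => if g α κ < ℓp κ then p κ (g α κ) else 0 with hval
  set w : Ordinal → Fin 2 := fun α =>
    if {κ ∈ a | ¬ (κ ∈ D α ∧ val α κ = 0)} ∈ J then 0 else 1 with hwdef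
  set blockw : Ordinal → ({i : Ordinal // i < μ.ord} → Fin 2) :=
    fun ξ => fun j => w (μ.ord * ξ + j.1) with hblockwdef
  set O : Ordinal → Ordinal := fun ξ =>
    Ordinal.limitRecOn ξ 0 (fun ρ ih => ih + Hlen (blockw ρ))
      (fun ρ _ ih => sSup (Set.range fun x : Set.Iio ρ => ih x.1 x.2)) with hOdef
  have hO0 : O 0 = 0 := Ordinal.limitRecOn_zero _ _ _
  have hOsucc : ∀ ξ, O (ξ + 1) = O ξ + Hlen (blockw ξ) := by
    intro ξ
    simp only [hOdef]
    rw [Ordinal.add_one_eq_succ, Ordinal.limitRecOn_succ]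
  have hOlim : ∀ ξ, Order.IsSuccLimit ξ → O ξ = sSup (O '' Set.Iio ξ) := by
    intro ξ hlim
    rw [Set.image_eq_range]
    simp only [hOdef]
    rw [Ordinal.limitRecOn_limit _ _ _ _ hlim]
  have hOlam : ∀ ξ, ξ < lam.ord → O ξ < lam.ord := by
    intro ξ
    induction ξ using Ordinal.induction with
    | h ξ IH =>
      intro hξlam
      rcases Ordinal.zero_or_succ_or_isSuccLimit ξ with h0 | ⟨ρ, rfl⟩ | hlim
      · rw [h0, hO0]
        exact (Cardinal.isSuccLimit_ord hlaminf).pos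
      · rw [← Ordinal.add_one_eq_succ, hOsucc ρ]
        exact hlamind _ _
          (IH ρ (by rw [← Ordinal.add_one_eq_succ]; exact lt_of_lt_of_le (lt_add_one ρ) le_rfl)
            (lt_trans (by rw [← Ordinal.add_one_eq_succ]; exact lt_add_one ρ) hξlam))
          (hHlt _)
      · have hbs : sSup (O '' Set.Iio ξ) = Ordinal.bsup ξ (fun ρ _ => O ρ) := by
          apply le_antisymm
          · have hne2 : (O '' Set.Iio ξ).Nonempty := ⟨O 0, 0, hlim.pos, rfl⟩
            apply csSup_le hne2
            rintro y ⟨ρ, hρ, rfl⟩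
            exact Ordinal.le_bsup _ ρ hρ
          · rw [Ordinal.bsup_le_iff]
            intro ρ hρ
            exact le_csSup (Ordinal.bddAbove_of_small) ⟨ρ, hρ, rfl⟩
        rw [hOlim ξ hlim, hbs]
        apply Ordinal.bsup_lt_ord
        · rw [hlam.cof_eq]
          exact Cardinal.lt_ord.1 hξlam
        · intro ρ hρ
          exact IH ρ hρ (hρ.trans hξlam)
  -- covering: everything below `O ξ` lies in some earlier block
  have hcov : ∀ ξ, ∀ j < O ξ, ∃ ξ' < ξ, ∃ d < Hlen (blockw ξ'), j = O ξ' + d := by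
    intro ξ
    induction ξ using Ordinal.induction with
    | h ξ IH =>
      intro j hj
      rcases Ordinal.zero_or_succ_or_isSuccLimit ξ with h0 | ⟨ρ, rfl⟩ | hlim
      · rw [h0, hO0] at hj
        exact absurd hj (not_lt_of_ge (zero_le (a := j)))
      · rw [← Ordinal.add_one_eq_succ, hOsucc ρ] at hj
        have hρsucc : ρ < Order.succ ρ := Order.lt_succ ρ
        rcases lt_or_ge j (O ρ) with hlt | hle
        · obtain ⟨ξ', h1, d, h2, h3⟩ := IH ρ hρsucc j hlt
          exact ⟨ξ', h1.trans hρsucc, d, h2, h3⟩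
        · refine ⟨ρ, hρsucc, j - O ρ, ?_, (Ordinal.add_sub_cancel_of_le hle).symm⟩
          rcases eq_zero_or_pos (Hlen (blockw ρ)) with hz | hpos
          · rw [hz, add_zero] at hj
            exact absurd hj (not_lt.2 hle)
          · exact Ordinal.sub_lt_of_lt_add hj hpos
      · rw [hOlim ξ hlim] at hj
        have hne : (O '' Set.Iio ξ).Nonempty := ⟨O 0, 0, hlim.pos, rfl⟩
        have hbdd : BddAbove (O '' Set.Iio ξ) := Ordinal.bddAbove_of_small
        obtain ⟨y, ⟨ρ, hρ, rfl⟩, hjy⟩ := (lt_csSup_iff hbdd hne).1 hj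
        obtain ⟨ξ', h1, rest⟩ := IH ρ hρ j hjy
        exact ⟨ξ', h1.trans hρ, rest⟩
  have hOζ : O ζ < lam.ord := hOlam ζ hζlam
  -- choose `s ∈ Dset` extending the decided bits `r`
  set Pd : Ordinal → Prop := fun j =>
    ∃ x : Ordinal × Ordinal, x.1 < ζ ∧ x.2 < Hlen (blockw x.1) ∧ j = O x.1 + x.2 with hPddef
  set r : Ordinal → Fin 2 := fun j =>
    if h : Pd j then Hfn (blockw h.choose.1) h.choose.2 else 0 with hrdef
  obtain ⟨s, hsD, hsl, hsr⟩ := hDdense (O ζ) hOζ r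
  have hs1 : s.1 < lam.ord := hDsub s hsD
  have hδeq : O ζ + (s.1 - O ζ) = s.1 := Ordinal.add_sub_cancel_of_le hsl
  have hδlt : s.1 - O ζ < lam.ord := lt_of_le_of_lt (Ordinal.sub_le_self _ _) hs1
  obtain ⟨σ, hσlen, hσfn⟩ := hHsurj (s.1 - O ζ) hδlt (fun d => s.2 (O ζ + d))
  -- the condition `q`
  set code : Cardinal → Ordinal → Fin 2 := fun κ x =>
    if h : ∃ i : {i : Ordinal // i < μ.ord},
        κ ∈ D (μ.ord * ζ + i.1) ∧ g (μ.ord * ζ + i.1) κ = x then σ h.choose else 0 with hcodedef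
  set ℓq : Cardinal → Ordinal := fun κ =>
    if κ ∈ D (μ.ord * ζ + μ.ord) then max (ℓp κ) (g (μ.ord * ζ + μ.ord) κ) else ℓp κ with hℓqdef
  set q : Cardinal → Ordinal → Fin 2 := fun κ x =>
    if x < ℓp κ then p κ x else code κ x with hqdef
  -- monotonicity of `g` within the coding block, and uniqueness of coding positions
  have hmono : ∀ (κ) (j j' : {i : Ordinal // i < μ.ord}), j.1 < j'.1 →
      κ ∈ D (μ.ord * ζ + j.1) → κ ∈ D (μ.ord * ζ + j'.1) →
      g (μ.ord * ζ + j.1) κ < g (μ.ord * ζ + j'.1) κ := by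
    intro κ j j' hjj hj hj'
    refine hgd (μ.ord * ζ + j.1) (μ.ord * ζ + j'.1) (add_lt_add_right hjj _) ?_
      (lt_trans (add_lt_add_right j'.2 _) hM1lam) κ ⟨hj, hj'⟩
    rw [add_assoc, habs j.1 j.2]
    exact add_lt_add_right j'.2 _
  have hmono0 : ∀ (κ) (j : {i : Ordinal // i < μ.ord}), 0 < j.1 →
      κ ∈ D (μ.ord * ζ) → κ ∈ D (μ.ord * ζ + j.1) →
      g (μ.ord * ζ) κ < g (μ.ord * ζ + j.1) κ := by
    intro κ j hpos hD0 hDj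
    have h := hmono κ ⟨0, hμlim.pos⟩ j hpos (by rwa [add_zero]) hDj
    rwa [add_zero] at h
  have huniq : ∀ (κ) (i i' : {i : Ordinal // i < μ.ord}), κ ∈ D (μ.ord * ζ + i.1) →
      κ ∈ D (μ.ord * ζ + i'.1) → g (μ.ord * ζ + i.1) κ = g (μ.ord * ζ + i'.1) κ → i = i' := by
    intro κ i i' h1 h2 h3
    rcases lt_trichotomy i.1 i'.1 with h | h | h
    · exact absurd h3 (hmono κ i i' h h1 h2).ne
    · exact Subtype.ext h
    · exact absurd h3.symm (hmono κ i' i h h2 h1).ne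
  -- `q` codes `σ` at the coding positions
  have hqcode : ∀ (κ) (i : {i : Ordinal // i < μ.ord}), κ ∈ D (μ.ord * ζ + i.1) →
      ℓp κ ≤ g (μ.ord * ζ + i.1) κ → q κ (g (μ.ord * ζ + i.1) κ) = σ i := by
    intro κ i hD hge
    have hex : ∃ i' : {i : Ordinal // i < μ.ord},
        κ ∈ D (μ.ord * ζ + i'.1) ∧ g (μ.ord * ζ + i'.1) κ = g (μ.ord * ζ + i.1) κ := ⟨i, hD, rfl⟩
    simp only [hqdef, hcodedef]
    rw [if_neg (not_lt.2 hge), dif_pos hex]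
    congr 1
    exact huniq κ hex.choose i hex.choose_spec.1 hD hex.choose_spec.2
  -- assemble the witnesses
  refine ⟨ℓq, q, ?_, ?_, s, hsD, ?_⟩
  · -- `q` is a condition
    intro κ hκ
    simp only [hℓqdef]
    by_cases hD1 : κ ∈ D (μ.ord * ζ + μ.ord)
    · rw [if_pos hD1]
      exact max_lt (hp κ hκ) ((hga _ hM1lam).2.2 κ hD1)
    · rw [if_neg hD1]
      exact hp κ hκ
  · -- `q` extends `p`
    intro κ hκ
    constructor
    · simp only [hℓqdef]
      by_cases hD1 : κ ∈ D (μ.ord * ζ + μ.ord)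
      · rw [if_pos hD1]; exact le_max_left _ _
      · rw [if_neg hD1]
    · intro i hi
      simp only [hqdef]
      rw [if_pos hi]
  -- the main claim
  intro η hη hEta hhEta off hoff0 hoffS hoffL i hi
  -- `hEta` agrees with `w` below the coding block
  have hwEta : ∀ α, α < μ.ord * ζ → hEta α = w α := by
    intro α hα
    have hN1 := hgb α (μ.ord * ζ) hα hMlam
    have hN2 := hgb (μ.ord * ζ) (μ.ord * ζ + μ.ord) hMM1 hM1lam
    have hkey : ∀ κ ∈ a, (κ ∈ D α ∧ κ ∈ D (μ.ord * ζ) ∧ g α κ < g (μ.ord * ζ) κ) →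
        (κ ∈ D (μ.ord * ζ) ∧ κ ∈ D (μ.ord * ζ + μ.ord) ∧
          g (μ.ord * ζ) κ < g (μ.ord * ζ + μ.ord) κ) →
        η κ (g α κ) = val α κ := by
      rintro κ hκa ⟨hDα, hDM, h1⟩ ⟨-, hDM1, h2⟩
      have hx : g α κ < ℓq κ := by
        simp only [hℓqdef]
        rw [if_pos hDM1]
        exact lt_of_lt_of_le (h1.trans h2) (le_max_right _ _)
      rw [hη κ hκa _ hx]
      simp only [hqdef, hval]
      by_cases hxp : g α κ < ℓp κ
      · rw [if_pos hxp, if_pos hxp]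
      · rw [if_neg hxp, if_neg hxp]
        simp only [hcodedef]
        rw [dif_neg]
        rintro ⟨i', hDi', hgi'⟩
        rcases eq_zero_or_pos i'.1 with h0 | hpos
        · rw [h0, add_zero] at hDi' hgi'
          exact absurd hgi' h1.ne'
        · have hlt := hmono0 κ i' hpos hDM hDi'
          rw [hgi'] at hlt
          exact absurd (h1.trans hlt) (lt_irrefl _)
    have hiff : ({κ ∈ a | ¬ (κ ∈ D α ∧ η κ (g α κ) = 0)} ∈ J) ↔
        ({κ ∈ a | ¬ (κ ∈ D α ∧ val α κ = 0)} ∈ J) := by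
      constructor
      · intro hmem
        refine hJsub _ _ (hJun _ (hJun _ hmem _ hN1) _ hN2) ?_
        rintro κ ⟨hκa, hκn⟩
        by_cases hb1 : κ ∈ D α ∧ κ ∈ D (μ.ord * ζ) ∧ g α κ < g (μ.ord * ζ) κ
        · by_cases hb2 : κ ∈ D (μ.ord * ζ) ∧ κ ∈ D (μ.ord * ζ + μ.ord) ∧
              g (μ.ord * ζ) κ < g (μ.ord * ζ + μ.ord) κ
          · left; left
            refine ⟨hκa, fun hc => hκn ?_⟩
            rw [← hkey κ hκa hb1 hb2]
            exact hc
          · right; exact ⟨hκa, hb2⟩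
        · left; right; exact ⟨hκa, hb1⟩
      · intro hmem
        refine hJsub _ _ (hJun _ (hJun _ hmem _ hN1) _ hN2) ?_
        rintro κ ⟨hκa, hκn⟩
        by_cases hb1 : κ ∈ D α ∧ κ ∈ D (μ.ord * ζ) ∧ g α κ < g (μ.ord * ζ) κ
        · by_cases hb2 : κ ∈ D (μ.ord * ζ) ∧ κ ∈ D (μ.ord * ζ + μ.ord) ∧
              g (μ.ord * ζ) κ < g (μ.ord * ζ + μ.ord) κ
          · left; left
            refine ⟨hκa, fun hc => hκn ?_⟩
            rw [hkey κ hκa hb1 hb2]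
            exact hc
          · right; exact ⟨hκa, hb2⟩
        · left; right; exact ⟨hκa, hb1⟩
    apply fin2_eq
    rw [hhEta α, hiff]
    simp only [hwdef]
    constructor
    · intro h; rw [if_pos h]
    · intro h
      by_contra hn
      rw [if_neg hn] at h
      exact one_ne_zero h
  -- blocks before the coding block agree with `blockw`
  have hblockEq : ∀ ξ, ξ < ζ →
      (fun j : {i : Ordinal // i < μ.ord} => hEta (μ.ord * ξ + j.1)) = blockw ξ := by
    intro ξ hξ
    funext j
    simp only [hblockwdef]
    apply hwEta
    calc μ.ord * ξ + j.1 < μ.ord * ξ + μ.ord := add_lt_add_right j.2 _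
    _ = μ.ord * (ξ + 1) := by rw [Ordinal.add_one_eq_succ, Ordinal.mul_succ]
    _ ≤ μ.ord * ζ := by
        rw [Ordinal.add_one_eq_succ]
        exact mul_le_mul_right (Order.succ_le_of_lt hξ) _
  -- the coding block agrees with `σ`
  have hEtaσ : ∀ j : {i : Ordinal // i < μ.ord}, hEta (μ.ord * ζ + j.1) = σ j := by
    intro j
    have hN2 := hgb (μ.ord * ζ + j.1) (μ.ord * ζ + μ.ord) (add_lt_add_right j.2 _) hM1lam
    have hgood : ∀ κ ∈ a, (κ ∈ D (μ.ord * ζ) ∧ ℓp κ < g (μ.ord * ζ) κ) →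
        (κ ∈ D (μ.ord * ζ + j.1) ∧ κ ∈ D (μ.ord * ζ + μ.ord) ∧
          g (μ.ord * ζ + j.1) κ < g (μ.ord * ζ + μ.ord) κ) →
        η κ (g (μ.ord * ζ + j.1) κ) = σ j := by
      rintro κ hκa ⟨hDM, hpM⟩ ⟨hDj, hDM1, hlt1⟩
      have hge : ℓp κ ≤ g (μ.ord * ζ + j.1) κ := by
        rcases eq_zero_or_pos j.1 with h0 | hpos
        · rw [h0, add_zero]
          exact hpM.le
        · exact (hpM.trans (hmono0 κ j hpos hDM hDj)).le
      have hx : g (μ.ord * ζ + j.1) κ < ℓq κ := by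
        simp only [hℓqdef]
        rw [if_pos hDM1]
        exact lt_of_lt_of_le hlt1 (le_max_right _ _)
      rw [hη κ hκa _ hx]
      exact hqcode κ j hDj hge
    by_cases hσ0 : σ j = 0
    · rw [hσ0]
      rw [(hhEta (μ.ord * ζ + j.1) : _)]
      refine hJsub _ _ (hJun _ hζJ _ hN2) ?_
      rintro κ ⟨hκa, hκn⟩
      by_cases hb1 : κ ∈ D (μ.ord * ζ) ∧ ℓp κ < g (μ.ord * ζ) κ
      · by_cases hb2 : κ ∈ D (μ.ord * ζ + j.1) ∧ κ ∈ D (μ.ord * ζ + μ.ord) ∧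
            g (μ.ord * ζ + j.1) κ < g (μ.ord * ζ + μ.ord) κ
        · exfalso
          apply hκn
          refine ⟨hb2.1, ?_⟩
          rw [hgood κ hκa hb1 hb2]
          exact hσ0
        · right; exact ⟨hκa, hb2⟩
      · left; exact ⟨hκa, hb1⟩
    · rw [fin2_one _ hσ0]
      apply fin2_one
      intro h0
      have hmem := (hhEta (μ.ord * ζ + j.1)).1 h0
      apply hJtop
      refine hJsub _ _ (hJun _ (hJun _ hmem _ hζJ) _ hN2) ?_
      intro κ hκa
      by_cases hb1 : κ ∈ D (μ.ord * ζ) ∧ ℓp κ < g (μ.ord * ζ) κ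
      · by_cases hb2 : κ ∈ D (μ.ord * ζ + j.1) ∧ κ ∈ D (μ.ord * ζ + μ.ord) ∧
            g (μ.ord * ζ + j.1) κ < g (μ.ord * ζ + μ.ord) κ
        · left; left
          refine ⟨hκa, fun hc => hσ0 ?_⟩
          rw [← hgood κ hκa hb1 hb2]
          exact hc.2
        · right; exact ⟨hκa, hb2⟩
      · left; right; exact ⟨hκa, hb1⟩
  have hblockζ : (fun j : {i : Ordinal // i < μ.ord} => hEta (μ.ord * ζ + j.1)) = σ :=
    funext hEtaσ
  -- the offsets agree with `O` up to `ζ`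
  have hoffO : ∀ ξ, ξ ≤ ζ → off ξ = O ξ := by
    intro ξ
    induction ξ using Ordinal.induction with
    | h ξ IH =>
      intro hξζ
      rcases Ordinal.zero_or_succ_or_isSuccLimit ξ with h0 | ⟨ρ, rfl⟩ | hlim
      · rw [h0, hoff0, hO0]
      · have hρζ : ρ < ζ := lt_of_lt_of_le (Order.lt_succ ρ) hξζ
        rw [← Ordinal.add_one_eq_succ, hoffS ρ, IH ρ (by rw [← Ordinal.add_one_eq_succ]; exact lt_add_one ρ) hρζ.le,
          hblockEq ρ hρζ, hOsucc ρ]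
      · rw [hoffL ξ hlim, hOlim ξ hlim]
        congr 1
        apply Set.image_congr
        intro ρ hρ
        exact IH ρ hρ (le_of_lt (lt_of_lt_of_le hρ hξζ))
  -- conclude
  rcases lt_or_ge i (O ζ) with hiO | hiO
  · obtain ⟨ξ', hξ', d, hd, hid⟩ := hcov ζ i hiO
    have hPdi : Pd i := ⟨(ξ', d), hξ', hd, hid⟩
    have hri : r i = Hfn (blockw hPdi.choose.1) hPdi.choose.2 := by
      simp only [hrdef]
      rw [dif_pos hPdi]
    obtain ⟨hc1, hc2, hc3⟩ := hPdi.choose_spec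
    refine ⟨hPdi.choose.1, lt_trans hc1 hζlam, hPdi.choose.2, ?_, ?_, ?_⟩
    · rw [hblockEq _ hc1]
      exact hc2
    · rw [hoffO _ hc1.le]
      exact hc3
    · rw [hsr i hiO, hri, hblockEq _ hc1]
  · have hid : O ζ + (i - O ζ) = i := Ordinal.add_sub_cancel_of_le hiO
    have hdδ : i - O ζ < s.1 - O ζ := by
      have h2 : O ζ + (i - O ζ) < O ζ + (s.1 - O ζ) := by
        rw [hid, hδeq]
        exact hi
      exact (add_lt_add_iff_left _).1 h2
    refine ⟨ζ, hζlam, i - O ζ, ?_, ?_, ?_⟩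
    · rw [hblockζ, hσlen]
      exact hdδ
    · rw [hoffO ζ le_rfl, hid]
    · rw [hblockζ, hσfn _ hdδ, hid]
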